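/- Let G be a graph with at least one edge and fix an edge j ∈ E. Then there exist constants C > 0 and a positive integer w, depending only on G, such that for all x ≥ 3, Σ |μ(n_1)⋯μ(n_e)| ∏_{r=1}^{v} 1/N_r ≤ C·(log log x)^w / x, where the sum extends over all edge numberings (n_a) of G with n_j > x. -/

import Mathlib

open scoped BigOperators Classical

noncomputable section

def vertexNum (v : ℕ) (E : Finset (Sym2 (Fin v))) (n : {a : Sym2 (Fin v) // a ∈ E} → ℕ+)
    (r : Fin v) : ℕ :=
  (E.attach.filter fun a => r ∈ a.1).lcm fun a => (n a : ℕ)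

namespace S15

open Finset
open scoped ENNReal

lemma finsetLcm_ne_zero {ι : Type*} {s : Finset ι} {f : ι → ℕ} (h : ∀ a ∈ s, f a ≠ 0) :
    s.lcm f ≠ 0 := by
  intro h0
  obtain ⟨a, ha, ha0⟩ := Set.mem_image _ _ _ |>.mp (Finset.lcm_eq_zero_iff.mp h0)
  exact h a ha ha0

lemma exists_prime_dvd_lcm {ι : Type*} {p : ℕ} (hp : p.Prime) {s : Finset ι} {f : ι → ℕ}
    (h : p ∣ s.lcm f) : ∃ a ∈ s, p ∣ f a := by
  classical
  induction s using Finset.induction_on with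
  | empty =>
      simp only [Finset.lcm_empty] at h
      exact absurd (Nat.dvd_one.mp h) hp.ne_one
  | @insert b s' hb ih =>
      rw [Finset.lcm_insert] at h
      have h2 : p ∣ f b * s'.lcm f :=
        h.trans (lcm_dvd (dvd_mul_right _ _) (dvd_mul_left _ _))
      rcases (hp.dvd_mul).mp h2 with h3 | h3
      · exact ⟨b, Finset.mem_insert_self _ _, h3⟩
      · obtain ⟨a, ha, hpa⟩ := ih h3
        exact ⟨a, Finset.mem_insert_of_mem ha, hpa⟩

lemma squarefree_nat_lcm {x y : ℕ} (hx : Squarefree x) (hy : Squarefree y) :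
    Squarefree (Nat.lcm x y) := by
  refine Nat.squarefree_of_factorization_le_one (Nat.lcm_ne_zero hx.ne_zero hy.ne_zero)
    (fun p => ?_)
  rw [Nat.factorization_lcm hx.ne_zero hy.ne_zero]
  exact sup_le (hx.natFactorization_le_one p) (hy.natFactorization_le_one p)

lemma squarefree_finsetLcm {ι : Type*} {s : Finset ι} {f : ι → ℕ}
    (h : ∀ a ∈ s, Squarefree (f a)) : Squarefree (s.lcm f) := by
  classical
  induction s using Finset.induction_on with
  | empty => simpa using squarefree_one
  | @insert b s' hb ih =>
      rw [Finset.lcm_insert, lcm_eq_nat_lcm]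
      exact squarefree_nat_lcm (h b (Finset.mem_insert_self _ _))
        (ih fun a ha => h a (Finset.mem_insert_of_mem ha))

lemma pp_dvd_prod {ι : Type*} {p : ℕ} {f : ι → ℕ} {s : Finset ι} {r1 r2 : ι} (h12 : r1 ≠ r2)
    (h1m : r1 ∈ s) (h2m : r2 ∈ s) (h1 : p ∣ f r1) (h2 : p ∣ f r2) : p * p ∣ ∏ r ∈ s, f r := by
  classical
  rw [← Finset.mul_prod_erase s f h1m]
  exact mul_dvd_mul h1
    (h2.trans (Finset.dvd_prod_of_mem f (Finset.mem_erase.mpr ⟨h12.symm, h2m⟩)))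

lemma ppp_dvd_prod {ι : Type*} {p : ℕ} {f : ι → ℕ} {s : Finset ι} {r1 r2 r3 : ι}
    (h12 : r1 ≠ r2) (h13 : r1 ≠ r3) (h23 : r2 ≠ r3)
    (h1m : r1 ∈ s) (h2m : r2 ∈ s) (h3m : r3 ∈ s)
    (h1 : p ∣ f r1) (h2 : p ∣ f r2) (h3 : p ∣ f r3) : p * (p * p) ∣ ∏ r ∈ s, f r := by
  classical
  rw [← Finset.mul_prod_erase s f h1m]
  refine mul_dvd_mul h1 (pp_dvd_prod h23 ?_ ?_ h2 h3)
  · exact Finset.mem_erase.mpr ⟨h12.symm, h2m⟩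
  · exact Finset.mem_erase.mpr ⟨h13.symm, h3m⟩

lemma edge_two_mem {v : ℕ} {s : Sym2 (Fin v)} (hs : ¬ s.IsDiag) :
    ∃ r1 r2 : Fin v, r1 ≠ r2 ∧ r1 ∈ s ∧ r2 ∈ s := by
  induction s using Sym2.ind with
  | _ a b =>
      refine ⟨a, b, ?_, Sym2.mem_mk_left _ _, Sym2.mem_mk_right _ _⟩
      intro hab
      exact hs (by simp [hab])

lemma edge_third_mem {v : ℕ} {s t : Sym2 (Fin v)} (hst : s ≠ t) (hs : ¬ s.IsDiag)
    (ht : ¬ t.IsDiag) :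
    ∃ r1 r2 r3 : Fin v, r1 ≠ r2 ∧ r1 ∈ s ∧ r2 ∈ s ∧ r3 ∈ t ∧ r3 ≠ r1 ∧ r3 ≠ r2 := by
  induction s using Sym2.ind with
  | _ a b =>
  induction t using Sym2.ind with
  | _ y z =>
      have hab : a ≠ b := fun h => hs (by simp [h])
      have hyz : y ≠ z := fun h => ht (by simp [h])
      by_cases hy : y ≠ a ∧ y ≠ b
      · exact ⟨a, b, y, hab, Sym2.mem_mk_left _ _, Sym2.mem_mk_right _ _,
          Sym2.mem_mk_left _ _, hy.1, hy.2⟩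
      · by_cases hz : z ≠ a ∧ z ≠ b
        · exact ⟨a, b, z, hab, Sym2.mem_mk_left _ _, Sym2.mem_mk_right _ _,
            Sym2.mem_mk_right _ _, hz.1, hz.2⟩
        · exfalso
          apply hst
          push_neg at hy hz
          rcases Classical.em (y = a) with h1 | h1
          · have h2 : z = b := by
              rcases Classical.em (z = a) with h | h
              · exact (hyz (h1.trans h.symm)).elim
              · exact hz h
            rw [h1, h2]
          · have h1' : y = b := hy h1
            have h2 : z = a := by
              rcases Classical.em (z = a) with h | h
              · exact h
              · exact (hyz (h1'.trans (hz h).symm)).elim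
            rw [h1', h2]
            exact (Sym2.eq_swap)

section Graph

variable {v : ℕ} {E : Finset (Sym2 (Fin v))}

lemma dvd_vertexNum (n : {a : Sym2 (Fin v) // a ∈ E} → ℕ+)
    (a : {a : Sym2 (Fin v) // a ∈ E}) {r : Fin v} (hr : r ∈ a.1) :
    (n a : ℕ) ∣ vertexNum v E n r :=
  Finset.dvd_lcm (Finset.mem_filter.mpr ⟨Finset.mem_attach _ _, hr⟩)

lemma vertexNum_ne_zero (n : {a : Sym2 (Fin v) // a ∈ E} → ℕ+) (r : Fin v) :
    vertexNum v E n r ≠ 0 :=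
  finsetLcm_ne_zero (fun a _ => (n a).ne_zero)

/-- The key divisibility: `u² L² ∣ gcd(u, L) · ∏ N_r` for squarefree edge numberings. -/
lemma key_dvd (hE : ∀ a ∈ E, ¬ a.IsDiag)
    (j : {a : Sym2 (Fin v) // a ∈ E}) (n : {a : Sym2 (Fin v) // a ∈ E} → ℕ+)
    (hsq : ∀ a, Squarefree (n a : ℕ)) :
    ((n j : ℕ)) ^ 2 * ((Finset.univ.erase j).lcm fun a => (n a : ℕ)) ^ 2 ∣
      Nat.gcd (n j : ℕ) ((Finset.univ.erase j).lcm fun a => (n a : ℕ)) *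
        ∏ r, vertexNum v E n r := by
  classical
  set u : ℕ := (n j : ℕ) with hu_def
  set L : ℕ := (Finset.univ.erase j).lcm (fun a => (n a : ℕ)) with hL_def
  set P : ℕ := ∏ r, vertexNum v E n r with hP_def
  have hu : u ≠ 0 := (n j).ne_zero
  have hL : L ≠ 0 := finsetLcm_ne_zero (fun a _ => (n a).ne_zero)
  have hP : P ≠ 0 := Finset.prod_ne_zero_iff.mpr (fun r _ => vertexNum_ne_zero n r)
  have hg : Nat.gcd u L ≠ 0 := Nat.gcd_ne_zero_left hu
  have hsqu : Squarefree u := hsq j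
  have hsqL : Squarefree L := squarefree_finsetLcm (fun a _ => hsq a)
  rw [← Nat.factorization_le_iff_dvd (by positivity) (mul_ne_zero hg hP)]
  intro p
  by_cases hp : p.Prime
  · have hfac : (u ^ 2 * L ^ 2).factorization p
        = 2 * u.factorization p + 2 * L.factorization p := by
      rw [Nat.factorization_mul (pow_ne_zero _ hu) (pow_ne_zero _ hL),
        Nat.factorization_pow, Nat.factorization_pow]
      simp
    have hfac2 : (Nat.gcd u L * P).factorization p
        = (Nat.gcd u L).factorization p + P.factorization p := by
      rw [Nat.factorization_mul hg hP]; simp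
    rw [hfac, hfac2]
    by_cases hpu : p ∣ u
    · by_cases hpL : p ∣ L
      · -- both: LHS ≤ 4, RHS ≥ 1 + 3
        obtain ⟨a, ha, hpa⟩ := exists_prime_dvd_lcm hp hpL
        have haj : a ≠ j := (Finset.mem_erase.mp ha).1
        have haj' : a.1 ≠ j.1 := fun h => haj (Subtype.ext h)
        obtain ⟨r1, r2, r3, h12, h1m, h2m, h3m, h31, h32⟩ :=
          edge_third_mem haj'.symm (hE j.1 j.2) (hE a.1 a.2)
        have hd1 : p ∣ vertexNum v E n r1 := hpu.trans (dvd_vertexNum n j h1m)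
        have hd2 : p ∣ vertexNum v E n r2 := hpu.trans (dvd_vertexNum n j h2m)
        have hd3 : p ∣ vertexNum v E n r3 := hpa.trans (dvd_vertexNum n a h3m)
        have h3P : p ^ 3 ∣ P := by
          have := ppp_dvd_prod h12 (Ne.symm h31) (Ne.symm h32)
            (Finset.mem_univ r1) (Finset.mem_univ r2) (Finset.mem_univ r3) hd1 hd2 hd3
          calc p ^ 3 = p * (p * p) := by ring
          _ ∣ P := this
        have hPf : 3 ≤ P.factorization p := (hp.pow_dvd_iff_le_factorization hP).mp h3P
        have hgf : 1 ≤ (Nat.gcd u L).factorization p := by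
          rw [← hp.pow_dvd_iff_le_factorization hg, pow_one]
          exact Nat.dvd_gcd hpu hpL
        have e1 : u.factorization p ≤ 1 := hsqu.natFactorization_le_one p
        have e2 : L.factorization p ≤ 1 := hsqL.natFactorization_le_one p
        omega
      · -- p ∣ u only
        have hLf : L.factorization p = 0 := Nat.factorization_eq_zero_of_not_dvd hpL
        obtain ⟨r1, r2, h12, h1m, h2m⟩ := edge_two_mem (hE j.1 j.2)
        have hd1 : p ∣ vertexNum v E n r1 := hpu.trans (dvd_vertexNum n j h1m)
        have hd2 : p ∣ vertexNum v E n r2 := hpu.trans (dvd_vertexNum n j h2m)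
        have h2P : p ^ 2 ∣ P := by
          have := pp_dvd_prod h12 (Finset.mem_univ r1) (Finset.mem_univ r2) hd1 hd2
          calc p ^ 2 = p * p := by ring
          _ ∣ P := this
        have hPf : 2 ≤ P.factorization p := (hp.pow_dvd_iff_le_factorization hP).mp h2P
        have e1 : u.factorization p ≤ 1 := hsqu.natFactorization_le_one p
        omega
    · by_cases hpL : p ∣ L
      · -- p ∣ L only
        have hLf : u.factorization p = 0 := Nat.factorization_eq_zero_of_not_dvd hpu
        obtain ⟨a, ha, hpa⟩ := exists_prime_dvd_lcm hp hpL
        obtain ⟨r1, r2, h12, h1m, h2m⟩ := edge_two_mem (hE a.1 a.2)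
        have hd1 : p ∣ vertexNum v E n r1 := hpa.trans (dvd_vertexNum n a h1m)
        have hd2 : p ∣ vertexNum v E n r2 := hpa.trans (dvd_vertexNum n a h2m)
        have h2P : p ^ 2 ∣ P := by
          have := pp_dvd_prod h12 (Finset.mem_univ r1) (Finset.mem_univ r2) hd1 hd2
          calc p ^ 2 = p * p := by ring
          _ ∣ P := this
        have hPf : 2 ≤ P.factorization p := (hp.pow_dvd_iff_le_factorization hP).mp h2P
        have e2 : L.factorization p ≤ 1 := hsqL.natFactorization_le_one p
        omega
      · have h1 : u.factorization p = 0 := Nat.factorization_eq_zero_of_not_dvd hpu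
        have h2 : L.factorization p = 0 := Nat.factorization_eq_zero_of_not_dvd hpL
        omega
  · simp [Nat.factorization_eq_zero_of_not_prime _ hp]

end Graph

section Analytic

lemma card_divisors_of_squarefree {L : ℕ} (hL : Squarefree L) :
    L.divisors.card = 2 ^ L.primeFactors.card := by
  rw [Nat.card_divisors hL.ne_zero]
  have hpe : ∀ p ∈ L.primeFactors, L.factorization p + 1 = 2 := fun p hp => by
    have h1 : L.factorization p ≤ 1 := hL.natFactorization_le_one p
    have h2 : L.factorization p ≠ 0 := by
      rw [← Finsupp.mem_support_iff, Nat.support_factorization]; exact hp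
    omega
  rw [Finset.prod_congr rfl hpe, Finset.prod_const]

lemma pow_omega_sq_le {k L : ℕ} (hk : 1 ≤ k) (hL : L ≠ 0) :
    (k ^ L.primeFactors.card) ^ 2 ≤ k ^ (2 * k ^ 2) * L := by
  classical
  set S := L.primeFactors.filter (fun p => p < k ^ 2) with hS
  set T := L.primeFactors.filter (fun p => ¬ p < k ^ 2) with hT
  have hcard : S.card + T.card = L.primeFactors.card :=
    Finset.card_filter_add_card_filter_not _
  have hScard : S.card ≤ k ^ 2 := by
    have hsub : S ⊆ Finset.range (k ^ 2) := fun p hp =>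
      Finset.mem_range.mpr (Finset.mem_filter.mp hp).2
    simpa using Finset.card_le_card hsub
  have hTprod : (k ^ 2) ^ T.card ≤ ∏ p ∈ T, p :=
    Finset.pow_card_le_prod _ _ _ (fun p hp => le_of_not_gt (Finset.mem_filter.mp hp).2)
  have hTL : ∏ p ∈ T, p ≤ L :=
    Nat.le_of_dvd (Nat.pos_of_ne_zero hL)
      ((Finset.prod_dvd_prod_of_subset _ _ _ (Finset.filter_subset _ _)).trans
        (Nat.prod_primeFactors_dvd L))
  have key : (k ^ L.primeFactors.card) ^ 2 = k ^ (2 * S.card) * (k ^ 2) ^ T.card := by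
    rw [← hcard, ← pow_mul, ← pow_mul]
    rw [← pow_add]
    ring_nf
  rw [key]
  exact Nat.mul_le_mul (Nat.pow_le_pow_right hk (by omega)) (hTprod.trans hTL)

/-- real weight `√m / m²`. -/
def w32 (m : ℕ) : ℝ := Real.sqrt m / (m : ℝ) ^ 2

lemma w32_nonneg (m : ℕ) : 0 ≤ w32 m := by
  unfold w32; positivity

lemma summable_w32 : Summable w32 := by
  refine Summable.of_nonneg_of_le w32_nonneg (f := fun m : ℕ => (m : ℝ) ^ (-(3/2) : ℝ)) ?_
    (Real.summable_nat_rpow.mpr (by norm_num))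
  intro m
  rcases Nat.eq_zero_or_pos m with rfl | hm
  · simp [w32, Real.zero_rpow (by norm_num : (-(3/2) : ℝ) ≠ 0)]
  · have hm' : (0:ℝ) < m := by exact_mod_cast hm
    have : w32 m = (m : ℝ) ^ (-(3/2) : ℝ) := by
      rw [w32, Real.sqrt_eq_rpow, ← Real.rpow_natCast (m:ℝ) 2, ← Real.rpow_sub hm']
      norm_num
    exact le_of_eq this

lemma summable_invsq : Summable (fun m : ℕ => ((m:ℝ) ^ 2)⁻¹) := by
  refine Summable.of_nonneg_of_le (fun m => by positivity)
    (f := fun m : ℕ => (m : ℝ) ^ (-2 : ℝ)) ?_ (Real.summable_nat_rpow.mpr (by norm_num))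
  intro m
  rcases Nat.eq_zero_or_pos m with rfl | hm
  · simp
  · have hm' : (0:ℝ) < m := by exact_mod_cast hm
    rw [← Real.rpow_natCast (m:ℝ) 2, ← Real.rpow_neg hm'.le]
    norm_num

/-- `c32 = ∑ √m/m²`. -/
def c32 : ℝ := ∑' m : ℕ, w32 m

/-- `c2 = ∑ 1/m²`. -/
def c2 : ℝ := ∑' m : ℕ, ((m:ℝ) ^ 2)⁻¹

lemma c32_nonneg : 0 ≤ c32 := tsum_nonneg w32_nonneg

lemma c2_nonneg : 0 ≤ c2 := tsum_nonneg (fun m => by positivity)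

lemma tsum_ofReal_w32 : ∑' m : ℕ, ENNReal.ofReal (w32 m) = ENNReal.ofReal c32 :=
  (ENNReal.ofReal_tsum_of_nonneg w32_nonneg summable_w32).symm

lemma tsum_ofReal_invsq : ∑' m : ℕ, ENNReal.ofReal (((m:ℝ) ^ 2)⁻¹) = ENNReal.ofReal c2 :=
  (ENNReal.ofReal_tsum_of_nonneg (fun m => by positivity) summable_invsq).symm

/-- Tail bound for `∑ 1/m²`. -/
lemma tail_sq_bound {x : ℝ} (hx : 1 ≤ x) :
    (∑' m : ℕ, if x < (m : ℝ) then ENNReal.ofReal (((m:ℝ) ^ 2)⁻¹) else 0)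
      ≤ ENNReal.ofReal (2 / x) := by
  rw [ENNReal.tsum_eq_iSup_sum]
  refine iSup_le fun s => ?_
  set k := ⌊x⌋₊ with hk
  have hk1 : 1 ≤ k := Nat.le_floor (by exact_mod_cast hx)
  have hkx : (k : ℝ) ≤ x := Nat.floor_le (by linarith)
  set N := max (s.sup id) k with hN
  have hsub : s.filter (fun m : ℕ => x < (m:ℝ)) ⊆ Finset.Ioc k N := by
    intro m hm
    obtain ⟨hms, hxm⟩ := Finset.mem_filter.mp hm
    refine Finset.mem_Ioc.mpr ⟨?_, ?_⟩
    · by_contra h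
      push_neg at h
      have : (m:ℝ) ≤ k := by exact_mod_cast h
      linarith
    · exact le_trans (Finset.le_sup (f := id) hms) (le_max_left _ _)
  calc ∑ m ∈ s, (if x < (m:ℝ) then ENNReal.ofReal (((m:ℝ) ^ 2)⁻¹) else 0)
      = ∑ m ∈ s.filter (fun m : ℕ => x < (m:ℝ)), ENNReal.ofReal (((m:ℝ) ^ 2)⁻¹) :=
        (Finset.sum_filter _ _).symm
    _ ≤ ∑ m ∈ Finset.Ioc k N, ENNReal.ofReal (((m:ℝ) ^ 2)⁻¹) :=
        Finset.sum_le_sum_of_subset hsub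
    _ = ENNReal.ofReal (∑ m ∈ Finset.Ioc k N, ((m:ℝ) ^ 2)⁻¹) :=
        (ENNReal.ofReal_sum_of_nonneg (fun i _ => by positivity)).symm
    _ ≤ ENNReal.ofReal (2 / x) := by
        refine ENNReal.ofReal_le_ofReal ?_
        have hkN : k ≤ N := le_max_right _ _
        have h1 := sum_Ioc_inv_sq_le_sub (α := ℝ) (by omega) hkN
        have h2 : (0:ℝ) ≤ (N:ℝ)⁻¹ := by positivity
        have hx2k : x ≤ 2 * k := by
          have hfl := Nat.lt_floor_add_one x
          have hk1' : (1:ℝ) ≤ k := by exact_mod_cast hk1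
          rw [← hk] at hfl
          linarith
        have h3 : (k:ℝ)⁻¹ ≤ 2 / x := by
          rw [inv_eq_one_div, div_le_div_iff₀ (by positivity) (by linarith)]
          linarith
        linarith

/-- Reindexing a sum supported on multiples of `t`. -/
lemma tsum_multiples {t : ℕ} (ht : t ≠ 0) (φ : ℕ → ENNReal)
    (hφ : ∀ L, ¬ t ∣ L → φ L = 0) :
    ∑' L, φ L = ∑' m, φ (t * m) := by
  have hinj : Function.Injective (fun m : ℕ => t * m) := fun a b h => by
    exact Nat.eq_of_mul_eq_mul_left (Nat.pos_of_ne_zero ht) h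
  have hsupp : Function.support φ ⊆ Set.range (fun m : ℕ => t * m) := by
    intro L hL
    by_contra hc
    refine hL (hφ L (fun hdvd => hc ?_))
    obtain ⟨m, rfl⟩ := hdvd
    exact ⟨m, rfl⟩
  rw [← tsum_subtype_eq_of_support_subset hsupp, tsum_range φ hinj]

end Analytic

section Chain

/-- `kk c = 2^c`. -/
def kk (c : ℕ) : ℕ := 2 ^ c

/-- `Kc c = (2^c)^((2^c)^2)`, the constant in the divisor-count bound. -/
def Kc (c : ℕ) : ℝ := ((kk c : ℕ) : ℝ) ^ (kk c ^ 2)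

lemma Kc_nonneg (c : ℕ) : 0 ≤ Kc c := by unfold Kc; positivity

lemma count_le {c L : ℕ} (hsq : Squarefree L) :
    ((L.divisors.card ^ c : ℕ) : ℝ) ≤ Kc c * Real.sqrt L := by
  have hk1 : 1 ≤ kk c := Nat.one_le_two_pow
  have h1 : L.divisors.card ^ c = kk c ^ L.primeFactors.card := by
    rw [card_divisors_of_squarefree hsq, kk, pow_right_comm]
  have h2 := pow_omega_sq_le hk1 hsq.ne_zero
  have ha : (0:ℝ) ≤ ((kk c ^ L.primeFactors.card : ℕ):ℝ) := Nat.cast_nonneg _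
  rw [h1]
  calc ((kk c ^ L.primeFactors.card : ℕ):ℝ)
      = Real.sqrt (((kk c ^ L.primeFactors.card : ℕ):ℝ) ^ 2) := (Real.sqrt_sq ha).symm
    _ ≤ Real.sqrt (((kk c : ℕ):ℝ) ^ (2 * kk c ^ 2) * L) := by
        refine Real.sqrt_le_sqrt ?_
        exact_mod_cast h2
    _ = Kc c * Real.sqrt L := by
        rw [Real.sqrt_mul (by positivity)]
        congr 1
        rw [Kc, show 2 * kk c ^ 2 = kk c ^ 2 * 2 by ring, pow_mul]
        exact Real.sqrt_sq (by positivity)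

lemma gcd_le_sum_divisors (u L : ℕ) (hu : u ≠ 0) :
    ((Nat.gcd u L : ℕ) : ℝ) ≤ ∑ t ∈ u.divisors, (if t ∣ L then (t:ℝ) else 0) := by
  have hmem : Nat.gcd u L ∈ u.divisors := Nat.mem_divisors.mpr ⟨Nat.gcd_dvd_left _ _, hu⟩
  have hs := Finset.single_le_sum (f := fun t => if t ∣ L then (t:ℝ) else 0)
    (fun i _ => by by_cases h : i ∣ L <;> simp [h]) hmem
  simpa [Nat.gcd_dvd_right u L] using hs

variable {β : Type*} [Fintype β]

/-- collapse of the `d`-sum. -/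
lemma tsum_ind_divisors (L : ℕ) :
    (∑' d : β → ℕ, (if ∀ b, d b ∈ L.divisors then (1:ℝ≥0∞) else 0))
      = ((L.divisors.card ^ Fintype.card β : ℕ) : ℝ≥0∞) := by
  classical
  rw [tsum_eq_sum (s := Fintype.piFinset fun _ : β => L.divisors) ?_]
  · have : ∀ d ∈ Fintype.piFinset fun _ : β => L.divisors,
        (if ∀ b, d b ∈ L.divisors then (1:ℝ≥0∞) else 0) = 1 := by
      intro d hd
      rw [if_pos (Fintype.mem_piFinset.mp hd)]
    rw [Finset.sum_congr rfl this, Finset.sum_const, Fintype.card_piFinset]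
    simp [Finset.prod_const]
  · intro d hd
    rw [if_neg]
    intro hall
    exact hd (Fintype.mem_piFinset.mpr hall)

end Chain

section Chain2

lemma tsumL_bound {a : ℝ} (ha : 0 ≤ a) {u t : ℕ} (hu : u ≠ 0) (ht : t ≠ 0) :
    ∑' L : ℕ, (if t ∣ L then
        ENNReal.ofReal (a * t * Real.sqrt L / ((u:ℝ)^2 * (L:ℝ)^2)) else 0)
      = ENNReal.ofReal (a * (Real.sqrt t / t) * (((u:ℝ)^2)⁻¹)) * ENNReal.ofReal c32 := by
  rw [tsum_multiples ht _ (fun L hL => if_neg hL)]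
  have htp : (0:ℝ) < t := by exact_mod_cast Nat.pos_of_ne_zero ht
  have hup : (0:ℝ) < u := by exact_mod_cast Nat.pos_of_ne_zero hu
  have hterm : ∀ m : ℕ,
      (if t ∣ t * m then
        ENNReal.ofReal (a * t * Real.sqrt ((t*m : ℕ)) / ((u:ℝ)^2 * (((t*m : ℕ)):ℝ)^2)) else 0)
      = ENNReal.ofReal (a * (Real.sqrt t / t) * (((u:ℝ)^2)⁻¹)) * ENNReal.ofReal (w32 m) := by
    intro m
    rw [if_pos (dvd_mul_right t m)]
    rw [← ENNReal.ofReal_mul (by positivity)]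
    congr 1
    rcases Nat.eq_zero_or_pos m with rfl | hm
    · simp [w32]
    · have hmp : (0:ℝ) < m := by exact_mod_cast hm
      rw [w32]
      push_cast
      rw [Real.sqrt_mul (le_of_lt htp)]
      field_simp
  rw [tsum_congr hterm, ENNReal.tsum_mul_left, tsum_ofReal_w32]

lemma tail_mul_bound {x : ℝ} (hx : 3 ≤ x) {t : ℕ} (ht : t ≠ 0) :
    (∑' m : ℕ, if x < ((t*m : ℕ):ℝ) then ENNReal.ofReal (((m:ℝ)^2)⁻¹) else 0)
      ≤ ENNReal.ofReal ((2 + c2) * t / x) := by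
  have htp : (0:ℝ) < t := by exact_mod_cast Nat.pos_of_ne_zero ht
  have hx0 : (0:ℝ) < x := by linarith
  rcases le_or_gt (t:ℝ) x with hcase | hcase
  · have hiff : ∀ m : ℕ, (if x < ((t*m:ℕ):ℝ) then ENNReal.ofReal (((m:ℝ)^2)⁻¹) else 0)
        = (if x / t < (m:ℝ) then ENNReal.ofReal (((m:ℝ)^2)⁻¹) else 0) := by
      intro m
      congr 1
      rw [eq_iff_iff]
      push_cast
      rw [div_lt_iff₀ htp]
      constructor <;> intro h <;> nlinarith [h]
    calc (∑' m : ℕ, if x < ((t*m:ℕ):ℝ) then ENNReal.ofReal (((m:ℝ)^2)⁻¹) else 0)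
        = ∑' m : ℕ, (if x / t < (m:ℝ) then ENNReal.ofReal (((m:ℝ)^2)⁻¹) else 0) :=
          tsum_congr hiff
      _ ≤ ENNReal.ofReal (2 / (x/t)) := tail_sq_bound (by rw [le_div_iff₀ htp]; linarith)
      _ ≤ ENNReal.ofReal ((2 + c2) * t / x) := by
          refine ENNReal.ofReal_le_ofReal ?_
          rw [div_div_eq_mul_div]
          gcongr
          nlinarith [c2_nonneg, htp]
  · have hle : ∀ m : ℕ, (if x < ((t*m:ℕ):ℝ) then ENNReal.ofReal (((m:ℝ)^2)⁻¹) else 0)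
        ≤ ENNReal.ofReal (((m:ℝ)^2)⁻¹) := by
      intro m
      split
      · exact le_rfl
      · exact zero_le
    calc (∑' m : ℕ, if x < ((t*m:ℕ):ℝ) then ENNReal.ofReal (((m:ℝ)^2)⁻¹) else 0)
        ≤ ∑' m : ℕ, ENNReal.ofReal (((m:ℝ)^2)⁻¹) :=
          Summable.tsum_le_tsum hle ENNReal.summable ENNReal.summable
      _ = ENNReal.ofReal c2 := tsum_ofReal_invsq
      _ ≤ ENNReal.ofReal ((2 + c2) * t / x) := by
          refine ENNReal.ofReal_le_ofReal ?_
          have h1 : (1:ℝ) ≤ (t:ℝ) / x := by rw [le_div_iff₀ hx0]; linarith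
          calc c2 ≤ (2 + c2) * 1 := by linarith [c2_nonneg]
            _ ≤ (2 + c2) * ((t:ℝ) / x) := by nlinarith [c2_nonneg]
            _ = (2 + c2) * (t:ℝ) / x := by ring

lemma theta_bound {x : ℝ} (hx : 3 ≤ x) (t : ℕ) :
    (∑' u : ℕ, if x < (u:ℝ) ∧ t ∈ u.divisors then
        ENNReal.ofReal (Real.sqrt t / t) * ENNReal.ofReal (((u:ℝ)^2)⁻¹) else 0)
      ≤ ENNReal.ofReal ((2 + c2) / x) * ENNReal.ofReal (w32 t) := by
  rcases Nat.eq_zero_or_pos t with rfl | htpos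
  · have hz : ∀ u : ℕ, (if x < (u:ℝ) ∧ (0:ℕ) ∈ u.divisors then
        ENNReal.ofReal (Real.sqrt 0 / 0) * ENNReal.ofReal (((u:ℝ)^2)⁻¹) else 0) = 0 := by
      intro u
      rw [if_neg]
      rintro ⟨-, hmem⟩
      simp [Nat.mem_divisors] at hmem
    simp only [Nat.cast_zero]
    rw [tsum_congr hz]
    simp
  · have ht0 : t ≠ 0 := htpos.ne'
    have htp : (0:ℝ) < t := by exact_mod_cast htpos
    rw [tsum_multiples ht0 _ (fun u hdvd => if_neg (fun h => hdvd (Nat.mem_divisors.mp h.2).1))]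
    have hterm : ∀ m : ℕ,
        (if x < ((t*m : ℕ):ℝ) ∧ t ∈ (t*m).divisors then
          ENNReal.ofReal (Real.sqrt t / t) * ENNReal.ofReal ((((t*m : ℕ)):ℝ)^2)⁻¹ else 0)
        ≤ (if x < ((t*m:ℕ):ℝ) then ENNReal.ofReal (((m:ℝ)^2)⁻¹) else 0) *
            (ENNReal.ofReal (Real.sqrt t / t) * ENNReal.ofReal (((t:ℝ)^2)⁻¹)) := by
      intro m
      split
      · rename_i h
        rw [if_pos h.1]
        have hinv : ((((t*m:ℕ)):ℝ)^2)⁻¹ = (((m:ℝ)^2)⁻¹) * (((t:ℝ)^2)⁻¹) := by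
          push_cast
          rw [mul_pow, mul_inv]
          ring
        rw [hinv, ENNReal.ofReal_mul (by positivity)]
        exact le_of_eq (by ring)
      · exact zero_le
    refine le_trans (Summable.tsum_le_tsum hterm ENNReal.summable ENNReal.summable) ?_
    rw [ENNReal.tsum_mul_right]
    refine le_trans (mul_le_mul_left (tail_mul_bound hx ht0) _) ?_
    have hc2' : (0:ℝ) ≤ 2 + c2 := by linarith [c2_nonneg]
    have hA : (0:ℝ) ≤ (2 + c2) * (t:ℝ) / x := by
      apply div_nonneg (mul_nonneg hc2' (Nat.cast_nonneg t)); linarith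
    have hB : (0:ℝ) ≤ (2 + c2) / x := by
      apply div_nonneg hc2'; linarith
    rw [← ENNReal.ofReal_mul (by positivity), ← ENNReal.ofReal_mul hA,
      ← ENNReal.ofReal_mul hB]
    refine ENNReal.ofReal_le_ofReal (le_of_eq ?_)
    rw [w32]
    field_simp

end Chain2

section Main

variable {β : Type*} [Fintype β]

/-- The constant for the analytic bound. -/
def CC (c : ℕ) : ℝ := Kc c * c32 * ((2 + c2) * c32)

lemma CC_nonneg (c : ℕ) : 0 ≤ CC c := by
  have h1 := Kc_nonneg c
  have h2 := c32_nonneg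
  have h3 := c2_nonneg
  unfold CC
  exact mul_nonneg (mul_nonneg h1 h2) (mul_nonneg (by linarith) h2)

lemma final_u_sum {x : ℝ} (hx : 3 ≤ x) :
    (∑' u : ℕ, if x < (u:ℝ) then
        ∑ t ∈ u.divisors, ENNReal.ofReal (Real.sqrt t / t) * ENNReal.ofReal (((u:ℝ)^2)⁻¹) else 0)
      ≤ ENNReal.ofReal ((2 + c2) / x) * ENNReal.ofReal c32 := by
  have hconv : ∀ u : ℕ, (if x < (u:ℝ) then
        ∑ t ∈ u.divisors, ENNReal.ofReal (Real.sqrt t / t) * ENNReal.ofReal (((u:ℝ)^2)⁻¹) else 0)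
      = ∑' t : ℕ, (if x < (u:ℝ) ∧ t ∈ u.divisors then
          ENNReal.ofReal (Real.sqrt t / t) * ENNReal.ofReal (((u:ℝ)^2)⁻¹) else 0) := by
    intro u
    by_cases hxu : x < (u:ℝ)
    · rw [if_pos hxu]
      rw [tsum_eq_sum (s := u.divisors) (fun t ht => if_neg (fun h => ht h.2))]
      exact Finset.sum_congr rfl (fun t ht => by rw [if_pos ⟨hxu, ht⟩])
    · rw [if_neg hxu]
      have hzz : ∀ t : ℕ, (if x < (u:ℝ) ∧ t ∈ u.divisors then
          ENNReal.ofReal (Real.sqrt t / t) * ENNReal.ofReal (((u:ℝ)^2)⁻¹) else 0) = 0 :=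
        fun t => if_neg (fun h => hxu h.1)
      rw [tsum_congr hzz, tsum_zero]
  rw [tsum_congr hconv, ENNReal.tsum_comm]
  calc (∑' t : ℕ, ∑' u : ℕ, (if x < (u:ℝ) ∧ t ∈ u.divisors then
          ENNReal.ofReal (Real.sqrt t / t) * ENNReal.ofReal (((u:ℝ)^2)⁻¹) else 0))
      ≤ ∑' t : ℕ, ENNReal.ofReal ((2 + c2)/x) * ENNReal.ofReal (w32 t) :=
        Summable.tsum_le_tsum (fun t => theta_bound hx t) ENNReal.summable ENNReal.summable
    _ = ENNReal.ofReal ((2 + c2)/x) * ENNReal.ofReal c32 := by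
        rw [ENNReal.tsum_mul_left, tsum_ofReal_w32]

theorem analytic_main {x : ℝ} (hx : 3 ≤ x) :
    (∑' z : ℕ × ℕ × (β → ℕ),
      (if ∀ b, z.2.2 b ∈ z.2.1.divisors then (1:ℝ≥0∞) else 0) *
      (if x < (z.1 : ℝ) ∧ Squarefree z.2.1 then
        ENNReal.ofReal ((Nat.gcd z.1 z.2.1 : ℝ) / ((z.1:ℝ)^2 * (z.2.1:ℝ)^2)) else 0))
    ≤ ENNReal.ofReal (CC (Fintype.card β) / x) := by
  classical
  set c := Fintype.card β with hc
  have hune : ∀ u : ℕ, x < (u:ℝ) → u ≠ 0 := by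
    intro u hxu h
    rw [h] at hxu
    norm_num at hxu
    linarith
  -- Step 1 : collapse the d-sum
  have step1 : ∀ u : ℕ, (∑' p : ℕ × (β → ℕ),
      (if ∀ b, p.2 b ∈ p.1.divisors then (1:ℝ≥0∞) else 0) *
      (if x < (u : ℝ) ∧ Squarefree p.1 then
        ENNReal.ofReal ((Nat.gcd u p.1 : ℝ) / ((u:ℝ)^2 * (p.1:ℝ)^2)) else 0))
      = ∑' L : ℕ, ((L.divisors.card ^ c : ℕ) : ℝ≥0∞) *
        (if x < (u : ℝ) ∧ Squarefree L then
          ENNReal.ofReal ((Nat.gcd u L : ℝ) / ((u:ℝ)^2 * (L:ℝ)^2)) else 0) := by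
    intro u
    rw [ENNReal.tsum_prod']
    refine tsum_congr (fun L => ?_)
    show (∑' d : β → ℕ, (if ∀ b, d b ∈ L.divisors then (1:ℝ≥0∞) else 0) *
      (if x < (u : ℝ) ∧ Squarefree L then
        ENNReal.ofReal ((Nat.gcd u L : ℝ) / ((u:ℝ)^2 * (L:ℝ)^2)) else 0)) = _
    rw [ENNReal.tsum_mul_right, tsum_ind_divisors]
  -- Step 2 : pointwise bound on the (u, L) term
  have claim1 : ∀ u L : ℕ, ((L.divisors.card ^ c : ℕ) : ℝ≥0∞) *
      (if x < (u : ℝ) ∧ Squarefree L then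
        ENNReal.ofReal ((Nat.gcd u L : ℝ) / ((u:ℝ)^2 * (L:ℝ)^2)) else 0)
      ≤ (if x < (u:ℝ) then ∑ t ∈ u.divisors, (if t ∣ L then
          ENNReal.ofReal (Kc c * t * Real.sqrt L / ((u:ℝ)^2 * (L:ℝ)^2)) else 0) else 0) := by
    intro u L
    by_cases hxu : x < (u:ℝ)
    swap
    · rw [if_neg hxu, if_neg (fun h => hxu h.1), mul_zero]
    rw [if_pos hxu]
    by_cases hsq : Squarefree L
    swap
    · rw [if_neg (fun h => hsq h.2), mul_zero]
      exact zero_le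
    rw [if_pos ⟨hxu, hsq⟩]
    have hu : u ≠ 0 := hune u hxu
    have hcnt : ((L.divisors.card ^ c : ℕ) : ℝ≥0∞) ≤ ENNReal.ofReal (Kc c * Real.sqrt L) := by
      rw [← ENNReal.ofReal_natCast]
      exact ENNReal.ofReal_le_ofReal (count_le hsq)
    refine le_trans (mul_le_mul_left hcnt _) ?_
    rw [← ENNReal.ofReal_mul (mul_nonneg (Kc_nonneg c) (Real.sqrt_nonneg _))]
    have hsum : ∀ t ∈ u.divisors, (if t ∣ L then
        ENNReal.ofReal (Kc c * t * Real.sqrt L / ((u:ℝ)^2 * (L:ℝ)^2)) else 0)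
        = ENNReal.ofReal (if t ∣ L then Kc c * t * Real.sqrt L / ((u:ℝ)^2 * (L:ℝ)^2) else 0) := by
      intro t _
      split <;> simp
    have hA : (0:ℝ) ≤ Kc c * Real.sqrt L / ((u:ℝ)^2 * (L:ℝ)^2) := by
      apply div_nonneg (mul_nonneg (Kc_nonneg c) (Real.sqrt_nonneg _))
      positivity
    have hnn : ∀ i ∈ u.divisors,
        (0:ℝ) ≤ (if i ∣ L then Kc c * i * Real.sqrt L / ((u:ℝ)^2 * (L:ℝ)^2) else 0) := by
      intro i _
      split
      · apply div_nonneg (mul_nonneg (mul_nonneg (Kc_nonneg c) (Nat.cast_nonneg i))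
          (Real.sqrt_nonneg _))
        positivity
      · exact le_rfl
    rw [Finset.sum_congr rfl hsum, ← ENNReal.ofReal_sum_of_nonneg hnn]
    refine ENNReal.ofReal_le_ofReal ?_
    have hgcd := gcd_le_sum_divisors u L hu
    calc Kc c * Real.sqrt L * ((Nat.gcd u L : ℝ) / ((u:ℝ)^2 * (L:ℝ)^2))
        = (Kc c * Real.sqrt L / ((u:ℝ)^2 * (L:ℝ)^2)) * ((Nat.gcd u L : ℕ) : ℝ) := by ring
      _ ≤ (Kc c * Real.sqrt L / ((u:ℝ)^2 * (L:ℝ)^2)) *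
            ∑ t ∈ u.divisors, (if t ∣ L then (t:ℝ) else 0) :=
          mul_le_mul_of_nonneg_left hgcd hA
      _ = ∑ t ∈ u.divisors, (if t ∣ L then
            Kc c * t * Real.sqrt L / ((u:ℝ)^2 * (L:ℝ)^2) else 0) := by
          rw [Finset.mul_sum]
          refine Finset.sum_congr rfl (fun t _ => ?_)
          split
          · ring
          · ring
  -- Step 3 : sum over L
  have step2 : ∀ u : ℕ, (∑' L : ℕ, (if x < (u:ℝ) then ∑ t ∈ u.divisors, (if t ∣ L then
      ENNReal.ofReal (Kc c * t * Real.sqrt L / ((u:ℝ)^2 * (L:ℝ)^2)) else 0) else 0))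
      ≤ ENNReal.ofReal (Kc c * c32) * (if x < (u:ℝ) then
          ∑ t ∈ u.divisors, ENNReal.ofReal (Real.sqrt t / t) * ENNReal.ofReal (((u:ℝ)^2)⁻¹)
        else 0) := by
    intro u
    by_cases hxu : x < (u:ℝ)
    swap
    · simp [hxu]
    rw [if_pos hxu]
    have hsimp : ∀ L : ℕ, (if x < (u:ℝ) then ∑ t ∈ u.divisors, (if t ∣ L then
        ENNReal.ofReal (Kc c * t * Real.sqrt L / ((u:ℝ)^2 * (L:ℝ)^2)) else 0) else 0)
        = ∑ t ∈ u.divisors, (if t ∣ L then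
        ENNReal.ofReal (Kc c * t * Real.sqrt L / ((u:ℝ)^2 * (L:ℝ)^2)) else 0) :=
      fun L => if_pos hxu
    rw [tsum_congr hsimp]
    have hu : u ≠ 0 := hune u hxu
    rw [Summable.tsum_finsetSum (fun t _ => ENNReal.summable)]
    rw [Finset.mul_sum]
    refine Finset.sum_le_sum (fun t htmem => ?_)
    have ht : t ≠ 0 := (Nat.pos_of_mem_divisors htmem).ne'
    rw [tsumL_bound (Kc_nonneg c) hu ht]
    rw [ENNReal.ofReal_mul (mul_nonneg (Kc_nonneg c) (by positivity)),
      ENNReal.ofReal_mul (Kc_nonneg c), ENNReal.ofReal_mul (Kc_nonneg c)]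
    exact le_of_eq (by ring)
  -- Assemble
  rw [ENNReal.tsum_prod', tsum_congr step1]
  refine le_trans (Summable.tsum_le_tsum (fun u =>
    le_trans (Summable.tsum_le_tsum (fun L => claim1 u L) ENNReal.summable ENNReal.summable)
      (step2 u)) ENNReal.summable ENNReal.summable) ?_
  rw [ENNReal.tsum_mul_left]
  refine le_trans (mul_le_mul_right (final_u_sum hx) _) ?_
  have hc2' : (0:ℝ) ≤ (2 + c2) / x := by
    apply div_nonneg (by linarith [c2_nonneg]); linarith
  rw [← ENNReal.ofReal_mul hc2', ← ENNReal.ofReal_mul (mul_nonneg (Kc_nonneg c) c32_nonneg)]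
  refine ENNReal.ofReal_le_ofReal (le_of_eq ?_)
  rw [CC]
  have hx0 : x ≠ 0 := by linarith
  field_simp

end Main

end S15

open scoped ENNReal

/-- For a graph with at least one edge and a fixed edge `j ∈ E`,
there exist `C > 0` and a positive integer `w`, depending only on the graph, such that
for all `x ≥ 3` the sum of `|μ(n_1) ⋯ μ(n_e)| ∏_{r=1}^{v} 1/N_r` over all edge numberings
with `n_j > x` is at most `C (log log x)^w / x`. -/
theorem stmt15 (v : ℕ) (E : Finset (Sym2 (Fin v))) (hE : ∀ a ∈ E, ¬ a.IsDiag)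
    (j : {a : Sym2 (Fin v) // a ∈ E}) :
    ∃ C : ℝ, 0 < C ∧ ∃ w : ℕ, 0 < w ∧ ∀ x : ℝ, 3 ≤ x →
      (∑' m : {n : {a : Sym2 (Fin v) // a ∈ E} → ℕ+ // x < ((n j : ℕ) : ℝ)},
          |∏ a, (ArithmeticFunction.moebius (m.1 a : ℕ) : ℝ)| *
            ∏ r, 1 / (vertexNum v E m.1 r : ℝ))
        ≤ C * Real.log (Real.log x) ^ w / x := by
  classical
  have hlog3 : (1:ℝ) < Real.log 3 := by
    rw [Real.lt_log_iff_exp_lt (by norm_num : (0:ℝ) < 3)]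
    calc Real.exp 1 < 2.7182818286 := Real.exp_one_lt_d9
      _ < 3 := by norm_num
  set δ : ℝ := Real.log (Real.log 3) with hδdef
  have hδ : 0 < δ := Real.log_pos hlog3
  set C0 : ℝ := S15.CC (Fintype.card {a : {a : Sym2 (Fin v) // a ∈ E} // a ≠ j}) with hC0def
  have hC0nn : 0 ≤ C0 := S15.CC_nonneg _
  refine ⟨(C0 + 1) / δ, by positivity, 1, one_pos, ?_⟩
  intro x hx
  have hx0 : (0:ℝ) < x := by linarith
  have main : (∑' m : {n : {a : Sym2 (Fin v) // a ∈ E} → ℕ+ // x < ((n j : ℕ) : ℝ)},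
      |∏ a, (ArithmeticFunction.moebius (m.1 a : ℕ) : ℝ)| *
        ∏ r, 1 / (vertexNum v E m.1 r : ℝ)) ≤ C0 / x := by
    set f : {n : {a : Sym2 (Fin v) // a ∈ E} → ℕ+ // x < ((n j : ℕ) : ℝ)} → ℝ :=
      fun m => |∏ a, (ArithmeticFunction.moebius (m.1 a : ℕ) : ℝ)| *
        ∏ r, 1 / (vertexNum v E m.1 r : ℝ) with hfdef
    have hf0 : ∀ m, 0 ≤ f m := fun m =>
      mul_nonneg (abs_nonneg _) (Finset.prod_nonneg fun r _ => by positivity)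
    by_cases hsumm : Summable f
    swap
    · rw [tsum_eq_zero_of_not_summable hsumm]
      positivity
    set ι : {n : {a : Sym2 (Fin v) // a ∈ E} → ℕ+ // x < ((n j : ℕ) : ℝ)} →
        ℕ × ℕ × ({a : {a : Sym2 (Fin v) // a ∈ E} // a ≠ j} → ℕ) :=
      fun m => ((m.1 j : ℕ), (Finset.univ.erase j).lcm (fun a => (m.1 a : ℕ)),
        fun b => (m.1 b.1 : ℕ)) with hιdef
    have hinj : Function.Injective ι := by
      intro m1 m2 h
      have h1 : ((m1.1 j : ℕ)) = ((m2.1 j : ℕ)) := congrArg Prod.fst h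
      have h3 : (fun b : {a : {a : Sym2 (Fin v) // a ∈ E} // a ≠ j} => ((m1.1 b.1 : ℕ)))
          = fun b => ((m2.1 b.1 : ℕ)) := congrArg (fun z => z.2.2) h
      refine Subtype.ext (funext fun a => ?_)
      by_cases ha : a = j
      · subst ha
        exact PNat.coe_injective h1
      · exact PNat.coe_injective (congrFun h3 ⟨a, ha⟩)
    set G : ℕ × ℕ × ({a : {a : Sym2 (Fin v) // a ∈ E} // a ≠ j} → ℕ) → ENNReal :=
      fun z => (if ∀ b, z.2.2 b ∈ z.2.1.divisors then (1:ℝ≥0∞) else 0) *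
        (if x < (z.1 : ℝ) ∧ Squarefree z.2.1 then
          ENNReal.ofReal ((Nat.gcd z.1 z.2.1 : ℝ) / ((z.1:ℝ)^2 * (z.2.1:ℝ)^2)) else 0)
      with hGdef
    have hle : ∀ m, ENNReal.ofReal (f m) ≤ G (ι m) := by
      intro m
      by_cases hsq : ∀ a, Squarefree ((m.1 a : ℕ))
      · set u : ℕ := ((m.1 j : ℕ)) with hudef
        set L : ℕ := (Finset.univ.erase j).lcm (fun a => (m.1 a : ℕ)) with hLdef
        have hLsq : Squarefree L := S15.squarefree_finsetLcm (fun a _ => hsq a)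
        have hL0 : L ≠ 0 := hLsq.ne_zero
        have hu0 : u ≠ 0 := (m.1 j).ne_zero
        have hcond1 : ∀ b : {a : {a : Sym2 (Fin v) // a ∈ E} // a ≠ j},
            ((m.1 b.1 : ℕ)) ∈ L.divisors := by
          intro b
          refine Nat.mem_divisors.mpr ⟨?_, hL0⟩
          exact Finset.dvd_lcm (Finset.mem_erase.mpr ⟨b.2, Finset.mem_univ _⟩)
        have hG : G (ι m) = ENNReal.ofReal ((Nat.gcd u L : ℝ) / ((u:ℝ)^2 * (L:ℝ)^2)) := by
          rw [hGdef, hιdef]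
          dsimp only
          rw [if_pos hcond1, if_pos ⟨m.2, hLsq⟩, one_mul]
        rw [hG]
        have hf : f m = (∏ r, (vertexNum v E m.1 r : ℝ))⁻¹ := by
          rw [hfdef]
          dsimp only
          have habs : |∏ a, (ArithmeticFunction.moebius (m.1 a : ℕ) : ℝ)| = 1 := by
            rw [Finset.abs_prod]
            have h1 : ∀ a ∈ (Finset.univ : Finset {a : Sym2 (Fin v) // a ∈ E}),
                |(ArithmeticFunction.moebius (m.1 a : ℕ) : ℝ)| = 1 := by
              intro a _
              have h := ArithmeticFunction.abs_moebius_eq_one_of_squarefree (hsq a)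
              exact_mod_cast h
            rw [Finset.prod_congr rfl h1, Finset.prod_const_one]
          rw [habs, one_mul, ← Finset.prod_inv_distrib]
          exact Finset.prod_congr rfl (fun r _ => one_div _)
        rw [hf]
        refine ENNReal.ofReal_le_ofReal ?_
        have hdvd := S15.key_dvd hE j m.1 hsq
        have hPne : (∏ r, vertexNum v E m.1 r) ≠ 0 :=
          Finset.prod_ne_zero_iff.mpr fun r _ => S15.vertexNum_ne_zero m.1 r
        have hle2 : (u^2 * L^2 : ℕ) ≤ Nat.gcd u L * ∏ r, vertexNum v E m.1 r :=
          Nat.le_of_dvd (Nat.pos_of_ne_zero (mul_ne_zero (Nat.gcd_ne_zero_left hu0) hPne))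
            hdvd
        have hPpos : (0:ℝ) < ∏ r, (vertexNum v E m.1 r : ℝ) := by
          refine Finset.prod_pos fun r _ => ?_
          exact_mod_cast Nat.pos_of_ne_zero (S15.vertexNum_ne_zero m.1 r)
        have hupos : (0:ℝ) < (u:ℝ) := by exact_mod_cast Nat.pos_of_ne_zero hu0
        have hLpos : (0:ℝ) < (L:ℝ) := by exact_mod_cast Nat.pos_of_ne_zero hL0
        rw [inv_eq_one_div, div_le_div_iff₀ hPpos (by positivity)]
        have hle2' : (u:ℝ)^2 * (L:ℝ)^2 ≤ (Nat.gcd u L : ℝ) * ∏ r, (vertexNum v E m.1 r : ℝ) := by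
          exact_mod_cast hle2
        linarith
      · push_neg at hsq
        obtain ⟨a, ha⟩ := hsq
        have hf : f m = 0 := by
          rw [hfdef]
          dsimp only
          rw [Finset.prod_eq_zero (Finset.mem_univ a)
            (by rw [ArithmeticFunction.moebius_eq_zero_of_not_squarefree ha, Int.cast_zero]),
            abs_zero, zero_mul]
        rw [hf, ENNReal.ofReal_zero]
        exact zero_le
    have hchain : (∑' m, ENNReal.ofReal (f m)) ≤ ENNReal.ofReal (C0 / x) := by
      refine le_trans (Summable.tsum_le_tsum_of_inj ι hinj (fun c _ => zero_le) hle
        ENNReal.summable ENNReal.summable) ?_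
      rw [hGdef, hC0def]
      exact S15.analytic_main hx
    rw [← ENNReal.ofReal_tsum_of_nonneg hf0 hsumm] at hchain
    exact (ENNReal.ofReal_le_ofReal_iff (by positivity)).mp hchain
  refine le_trans main ?_
  rw [pow_one]
  have hlogx : δ ≤ Real.log (Real.log x) := by
    rw [hδdef]
    refine Real.log_le_log (by linarith) ?_
    exact Real.log_le_log (by norm_num) hx
  have hC : (0:ℝ) < (C0+1)/δ := by positivity
  have hkey : C0 ≤ (C0+1)/δ * Real.log (Real.log x) := by
    have h2 : (C0+1)/δ * δ = C0 + 1 := by field_simp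
    nlinarith [mul_le_mul_of_nonneg_left hlogx (le_of_lt hC)]
  exact (div_le_div_iff_of_pos_right hx0).mpr hkey
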